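/- For any S×S row-stochastic matrix P and any vector x ∈ ℝ^S, the sequence P^t·x converges exponentially to a periodic orbit: there exist ρ > 0, p ∈ ℕ with p ≥ 1, T ∈ ℕ, and vectors y(t) ∈ ℝ^S for t ∈ ℕ such that y(t+p) = y(t) for all t ≥ T, and for every s ∈ {1,…,S}, lim_{t→∞} e^{ρt} |(P^t·x − y(t))_s| = 0. -/

import Mathlib

open Filter Finset Topology

/-- A bounded real sequence (an element of 𝒰). Index `t : ℕ` represents time `t+1`. -/
def Bdd (u : ℕ → ℝ) : Prop := ∃ C : ℝ, ∀ t, |u t| ≤ C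

/-- Partial sum `∑_{t=1}^n u_t`. -/
noncomputable def psum (u : ℕ → ℝ) (n : ℕ) : ℝ := ∑ t ∈ Finset.range n, u t

/-- Cesàro average `(1/n) ∑_{T=1}^n ∑_{t=1}^T u_t`. -/
noncomputable def cesaroAvg (u : ℕ → ℝ) (n : ℕ) : ℝ :=
  (∑ T ∈ Finset.range n, psum u (T + 1)) / n

/-- The series `∑ u_t` is Cesàro-summable. -/
def CesaroSummable (u : ℕ → ℝ) : Prop :=
  ∃ L : ℝ, Filter.Tendsto (cesaroAvg u) Filter.atTop (nhds L)

/-- The series `∑ u_t` has bounded partial sums. -/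
def BddPartialSums (u : ℕ → ℝ) : Prop := ∃ C : ℝ, ∀ n, |psum u n| ≤ C

/-- The long-run average of `u` exists and equals `a`. -/
def AvgTo (u : ℕ → ℝ) (a : ℝ) : Prop :=
  Filter.Tendsto (fun n : ℕ => psum u n / n) Filter.atTop (nhds a)

/-- The sequence `(c, u_1, u_2, …)`. -/
def cons (c : ℝ) (u : ℕ → ℝ) : ℕ → ℝ := fun t => if t = 0 then c else u (t - 1)

/-- The discounted sum `∑_{t=1}^∞ β^t d_t`. -/
noncomputable def discSum (d : ℕ → ℝ) (β : ℝ) : ℝ := ∑' t : ℕ, β ^ (t + 1) * d t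

/-- The Blackwell relation `u ≿_B v`. -/
def BlackwellGE (u v : ℕ → ℝ) : Prop :=
  0 ≤ Filter.liminf (fun β => discSum (u - v) β) (nhdsWithin 1 (Set.Iio 1))

/-- Veinott's average overtaking relation `u ≿_V v`. -/
def VeinottGE (u v : ℕ → ℝ) : Prop :=
  0 ≤ Filter.liminf (cesaroAvg (u - v)) Filter.atTop

/-- Reflexivity of the preference relation on 𝒰. -/
def ReflOn (R : (ℕ → ℝ) → (ℕ → ℝ) → Prop) : Prop := ∀ u, Bdd u → R u u

/-- Transitivity of the preference relation on 𝒰. -/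
def TransOn (R : (ℕ → ℝ) → (ℕ → ℝ) → Prop) : Prop :=
  ∀ u v w, Bdd u → Bdd v → Bdd w → R u v → R v w → R u w

/-- Strict preference `u ≻ v`. -/
def StrictPref (R : (ℕ → ℝ) → (ℕ → ℝ) → Prop) (u v : ℕ → ℝ) : Prop := R u v ∧ ¬ R v u

/-- Axiom A1: `u > v` implies `u ≻ v`. -/
def AxiomA1 (R : (ℕ → ℝ) → (ℕ → ℝ) → Prop) : Prop :=
  ∀ u v, Bdd u → Bdd v → (∀ t, v t ≤ u t) → (∃ t, v t < u t) → StrictPref R u v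

/-- Axiom A2: `u ≿ v` implies `u + α ≿ v + α`. -/
def AxiomA2 (R : (ℕ → ℝ) → (ℕ → ℝ) → Prop) : Prop :=
  ∀ u v α, Bdd u → Bdd v → Bdd α → R u v → R (u + α) (v + α)

/-- Axiom A3: if the long-run average `ū` exists then `(ū, u) ∼ u`. -/
def AxiomA3 (R : (ℕ → ℝ) → (ℕ → ℝ) → Prop) : Prop :=
  ∀ u a, Bdd u → AvgTo u a → (R (cons a u) u ∧ R u (cons a u))

/-- `w` is eventually periodic with period `p` from time `T` onward. -/
def EvPeriodicFrom (w : ℕ → ℝ) (p T : ℕ) : Prop := 1 ≤ p ∧ ∀ t, T ≤ t → w (t + p) = w t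

/-- `w` is eventually periodic. -/
def EvPeriodic (w : ℕ → ℝ) : Prop := ∃ p T : ℕ, EvPeriodicFrom w p T

/-- The set 𝒰₊: bounded streams of the form `w + Δ`, `w` eventually periodic and
`∑ Δ_t` Cesàro-summable with bounded partial sums. -/
def UPlus (u : ℕ → ℝ) : Prop :=
  Bdd u ∧ ∃ w Δ : ℕ → ℝ, u = w + Δ ∧ EvPeriodic w ∧ CesaroSummable Δ ∧ BddPartialSums Δ

/-- An `S × S` row-stochastic matrix. -/
def RowStochastic {S : ℕ} (Q : Matrix (Fin S) (Fin S) ℝ) : Prop :=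
  (∀ i j, 0 ≤ Q i j) ∧ ∀ i, ∑ j, Q i j = 1

/-- 𝒰_stat: streams generated by stationary policies of finite MDPs,
`u_t = (Q^{t-1} · R)_s` (here `u t` is `u_{t+1}`, so `u t = (Q^t · R)_s`). -/
def UStat (u : ℕ → ℝ) : Prop :=
  ∃ (S : ℕ) (_ : 0 < S) (Q : Matrix (Fin S) (Fin S) ℝ) (R : Fin S → ℝ) (s : Fin S),
    RowStochastic Q ∧ ∀ t : ℕ, u t = ((Q ^ t).mulVec R) s



section AuxNorm

variable {E : Type*} [NormedAddCommGroup E] [NormedSpace ℂ E]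

lemma aux_pow_norm_le (f : Module.End ℂ E) (hf : ∀ v, ‖f v‖ ≤ ‖v‖) :
    ∀ (t : ℕ) (v : E), ‖(f ^ t) v‖ ≤ ‖v‖ := by
  intro t
  induction t with
  | zero => simp
  | succ n ih =>
    intro v
    rw [pow_succ]
    exact le_trans (ih (f v)) (hf v)

lemma aux_eig_abs_le (f : Module.End ℂ E) (hf : ∀ v, ‖f v‖ ≤ ‖v‖) {μ : ℂ} {v : E}
    (hv : v ≠ 0) (h : f v = μ • v) : ‖μ‖ ≤ 1 := by
  have h1 := hf v
  rw [h, norm_smul] at h1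
  have hv' : 0 < ‖v‖ := norm_pos_iff.mpr hv
  nlinarith

lemma aux_exists_eigvec (f : Module.End ℂ E) (μ : ℂ) :
    ∀ (k : ℕ) (v : E), ((f - μ • 1) ^ k) v = 0 → v ≠ 0 → ∃ w : E, w ≠ 0 ∧ f w = μ • w := by
  intro k
  induction k with
  | zero => intro v h hv; simp at h; exact absurd h hv
  | succ n ih =>
    intro v h hv
    by_cases hu : (f - μ • 1) v = 0
    · refine ⟨v, hv, ?_⟩
      have : f v - μ • v = 0 := by simpa [LinearMap.sub_apply] using hu
      exact sub_eq_zero.mp this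
    · refine ih ((f - μ • 1) v) ?_ hu
      rw [← Module.End.mul_apply, ← pow_succ]
      exact h

end AuxNorm


section AuxNorm2

variable {E : Type*} [NormedAddCommGroup E] [NormedSpace ℂ E]

lemma aux_semisimple (f : Module.End ℂ E) (hf : ∀ (t : ℕ) (v : E), ‖(f ^ t) v‖ ≤ ‖v‖)
    {μ : ℂ} (hμ : ‖μ‖ = 1) :
    ∀ (k : ℕ) (v : E), ((f - μ • 1) ^ k) v = 0 → f v = μ • v := by
  intro k
  induction k with
  | zero =>
    intro v h
    simp at h
    simp [h]
  | succ n ih =>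
    intro v h
    set u := (f - μ • 1) v with hudef
    have hu' : f u = μ • u := by
      apply ih
      rw [hudef, ← Module.End.mul_apply, ← pow_succ]
      exact h
    have hfv : f v = μ • v + u := by
      simp [hudef, LinearMap.sub_apply]
    suffices hu0 : u = 0 by rw [hfv, hu0, add_zero]
    by_contra hu0
    have key : ∀ t : ℕ, μ • ((f ^ t) v) = μ ^ (t + 1) • v + ((t : ℂ) * μ ^ t) • u := by
      intro t
      induction t with
      | zero => simp
      | succ s ihs =>
        have hps : (f ^ (s + 1)) v = f ((f ^ s) v) := by
          rw [pow_succ']; rfl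
        rw [hps, ← map_smul, ihs, map_add, map_smul, map_smul, hfv, hu']
        push_cast
        module
    have hbound : ∀ t : ℕ, (t : ℝ) * ‖u‖ - ‖v‖ ≤ ‖v‖ := by
      intro t
      have h1 : ‖μ • ((f ^ t) v)‖ ≤ ‖v‖ := by
        rw [norm_smul, hμ, one_mul]; exact hf t v
      have h2 : ‖((t : ℂ) * μ ^ t) • u‖ - ‖μ ^ (t + 1) • v‖ ≤ ‖μ • ((f ^ t) v)‖ := by
        rw [key t]
        have h5 := norm_sub_le (μ ^ (t + 1) • v + ((t : ℂ) * μ ^ t) • u) (μ ^ (t + 1) • v)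
        simp only [add_sub_cancel_left] at h5
        linarith
      have h3 : ‖((t : ℂ) * μ ^ t) • u‖ = (t : ℝ) * ‖u‖ := by
        rw [norm_smul, norm_mul, norm_pow, hμ, one_pow, mul_one, Complex.norm_natCast]
      have h4 : ‖μ ^ (t + 1) • v‖ = ‖v‖ := by
        rw [norm_smul, norm_pow, hμ, one_pow, one_mul]
      linarith
    obtain ⟨t, ht⟩ := exists_nat_gt (2 * ‖v‖ / ‖u‖)
    have hupos : 0 < ‖u‖ := norm_pos_iff.mpr hu0
    have := hbound t
    rw [div_lt_iff₀ hupos] at ht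
    linarith

end AuxNorm2


section AuxDecay

variable {E : Type*} [NormedAddCommGroup E] [NormedSpace ℂ E]

lemma aux_decay (f : Module.End ℂ E) {μ : ℂ} (hμ : μ ≠ 0) {m : ℕ} {v : E}
    (h : ((f - μ • 1) ^ m) v = 0) :
    ∃ K : ℝ, ∀ t : ℕ, 1 ≤ t → m ≤ t →
      ‖(f ^ t) v‖ ≤ K * (t : ℝ) ^ m * ‖μ‖ ^ t := by
  classical
  set N := f - μ • 1 with hN
  refine ⟨∑ k ∈ Finset.range m, ‖(N ^ k) v‖ / ‖μ‖ ^ k, ?_⟩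
  intro t ht1 htm
  have hcomm : Commute N (μ • (1 : Module.End ℂ E)) := by
    apply Commute.smul_right
    exact Commute.one_right N
  have hf : f = N + μ • 1 := by rw [hN]; abel
  have hbin : f ^ t = ∑ j ∈ Finset.range (t + 1),
      N ^ j * (μ • (1 : Module.End ℂ E)) ^ (t - j) * (t.choose j : Module.End ℂ E) := by
    rw [hf]; exact hcomm.add_pow t
  have happ : ∀ j, (N ^ j * (μ • (1 : Module.End ℂ E)) ^ (t - j)
      * (t.choose j : Module.End ℂ E)) v = ((t.choose j : ℂ) * μ ^ (t - j)) • ((N ^ j) v) := by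
    intro j
    rw [Module.End.mul_apply, Module.End.mul_apply, Module.End.natCast_apply, smul_pow, one_pow]
    rw [LinearMap.smul_apply, Module.End.one_apply]
    rw [map_smul, map_nsmul, ← Nat.cast_smul_eq_nsmul ℂ, smul_smul, mul_comm]
  have hzero : ∀ j, m ≤ j → (N ^ j) v = 0 := by
    intro j hj
    have : N ^ j = N ^ (j - m) * N ^ m := by
      rw [← pow_add, Nat.sub_add_cancel hj]
    rw [this, Module.End.mul_apply, h, map_zero]
  have hft : (f ^ t) v = ∑ j ∈ Finset.range m, ((t.choose j : ℂ) * μ ^ (t - j)) • ((N ^ j) v) := by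
    rw [hbin, LinearMap.sum_apply]
    rw [Finset.sum_congr rfl fun j _ => happ j]
    symm
    apply Finset.sum_subset
    · exact Finset.range_subset_range.mpr (by omega)
    · intro j hj hj'
      rw [hzero j (by simp at hj'; omega), smul_zero]
  rw [hft]
  calc ‖∑ j ∈ Finset.range m, ((t.choose j : ℂ) * μ ^ (t - j)) • ((N ^ j) v)‖
      ≤ ∑ j ∈ Finset.range m, ‖((t.choose j : ℂ) * μ ^ (t - j)) • ((N ^ j) v)‖ :=
        norm_sum_le _ _
    _ ≤ ∑ j ∈ Finset.range m, (‖(N ^ j) v‖ / ‖μ‖ ^ j) * (t : ℝ) ^ m * ‖μ‖ ^ t := by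
        apply Finset.sum_le_sum
        intro j hj
        rw [norm_smul, norm_mul, norm_pow, Complex.norm_natCast]
        have hjt : j ≤ t := by simp at hj; omega
        have hμpos : 0 < ‖μ‖ := norm_pos_iff.mpr hμ
        have h1 : (t.choose j : ℝ) ≤ (t : ℝ) ^ m := by
          calc (t.choose j : ℝ) ≤ (t : ℝ) ^ j := by exact_mod_cast Nat.choose_le_pow t j
            _ ≤ (t : ℝ) ^ m := by
                apply pow_le_pow_right₀ (by exact_mod_cast ht1)
                simp at hj; omega
        have h2 : ‖μ‖ ^ (t - j) = ‖μ‖ ^ t / ‖μ‖ ^ j := by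
          rw [eq_div_iff (by positivity), ← pow_add, Nat.sub_add_cancel hjt]
        rw [h2]
        have hB : (0:ℝ) < ‖μ‖ ^ j := by positivity
        have hre : (t.choose j : ℝ) * (‖μ‖ ^ t / ‖μ‖ ^ j) * ‖(N ^ j) v‖
            = (t.choose j : ℝ) * ‖μ‖ ^ t * ‖(N ^ j) v‖ / ‖μ‖ ^ j := by ring
        have hre2 : ‖(N ^ j) v‖ / ‖μ‖ ^ j * (t:ℝ) ^ m * ‖μ‖ ^ t
            = ‖(N ^ j) v‖ * (t:ℝ) ^ m * ‖μ‖ ^ t / ‖μ‖ ^ j := by ring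
        rw [hre, hre2, div_le_div_iff_of_pos_right hB]
        calc (t.choose j : ℝ) * ‖μ‖ ^ t * ‖(N ^ j) v‖
            = (t.choose j : ℝ) * (‖μ‖ ^ t * ‖(N ^ j) v‖) := by ring
          _ ≤ (t : ℝ) ^ m * (‖μ‖ ^ t * ‖(N ^ j) v‖) :=
              mul_le_mul_of_nonneg_right h1
                (mul_nonneg (pow_nonneg hμpos.le t) (norm_nonneg _))
          _ = ‖(N ^ j) v‖ * (t : ℝ) ^ m * ‖μ‖ ^ t := by ring
    _ = (∑ k ∈ Finset.range m, ‖(N ^ k) v‖ / ‖μ‖ ^ k) * (t : ℝ) ^ m * ‖μ‖ ^ t := by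
        rw [Finset.sum_mul, Finset.sum_mul]

end AuxDecay




lemma aux_root_of_unity {S : ℕ} (hS : 0 < S) (P : Matrix (Fin S) (Fin S) ℝ)
    (hP : RowStochastic P) {μ : ℂ} (hμ : ‖μ‖ = 1) {v : Fin S → ℂ} (hv : v ≠ 0)
    (heig : (P.map Complex.ofReal).mulVec v = μ • v) : μ ^ S.factorial = 1 := by
  classical
  have hne : (Finset.univ : Finset (Fin S)).Nonempty := ⟨⟨0, hS⟩, Finset.mem_univ _⟩
  obtain ⟨i₀, -, hi₀⟩ := Finset.exists_max_image Finset.univ (fun i => ‖v i‖) hne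
  set M := ‖v i₀‖ with hM
  have hle : ∀ j, ‖v j‖ ≤ M := fun j => hi₀ j (Finset.mem_univ _)
  have hMpos : 0 < M := by
    rcases lt_or_ge 0 M with h | h
    · exact h
    · exfalso
      apply hv
      funext j
      have h2 : ‖v j‖ ≤ 0 := le_trans (hle j) h
      simpa using le_antisymm h2 (norm_nonneg _)
  have hvi₀ : v i₀ ≠ 0 := by
    intro h0
    rw [hM, h0, norm_zero] at hMpos
    exact lt_irrefl 0 hMpos
  have hμ0 : μ ≠ 0 := by
    intro h0; rw [h0, norm_zero] at hμ; norm_num at hμ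
  -- key step
  have key : ∀ i, ‖v i‖ = M → ∃ j, ‖v j‖ = M ∧ v j = μ * v i := by
    intro i hi
    have hrow : ∑ j, (P i j : ℂ) * v j = μ * v i := by
      have := congrFun heig i
      simpa [Matrix.mulVec, dotProduct, Matrix.map_apply, Pi.smul_apply,
        smul_eq_mul] using this
    set w := (starRingEnd ℂ) (μ * v i) with hw
    have hwnorm : ‖w‖ = M := by
      rw [hw, RCLike.norm_conj, norm_mul, hμ, one_mul, hi]
    have hw0 : w ≠ 0 := by
      intro h0; rw [h0, norm_zero] at hwnorm; exact (ne_of_gt hMpos) hwnorm.symm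
    have hwz : w * (μ * v i) = ((M ^ 2 : ℝ) : ℂ) := by
      rw [hw, mul_comm, Complex.mul_conj]
      norm_cast
      rw [Complex.normSq_eq_norm_sq, norm_mul, hμ, one_mul, hi]
    have h1 : ∑ j, P i j * (w * v j).re = M ^ 2 := by
      have h2 : (w * ∑ j, (P i j : ℂ) * v j).re = M ^ 2 := by
        rw [hrow, hwz, Complex.ofReal_re]
      rw [← h2, Finset.mul_sum, Complex.re_sum]
      apply Finset.sum_congr rfl
      intro j _
      rw [show w * ((P i j : ℂ) * v j) = (P i j : ℂ) * (w * v j) by ring]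
      exact (Complex.re_ofReal_mul _ _).symm
    have hterm : ∀ j, (w * v j).re ≤ M ^ 2 := by
      intro j
      calc (w * v j).re ≤ ‖w * v j‖ := Complex.re_le_norm _
        _ = ‖w‖ * ‖v j‖ := norm_mul _ _
        _ ≤ M * M := mul_le_mul (le_of_eq hwnorm) (hle j) (norm_nonneg _) hMpos.le
        _ = M ^ 2 := by ring
    have hzero2 : ∑ j, P i j * (M ^ 2 - (w * v j).re) = 0 := by
      have : ∑ j, P i j * (M ^ 2 - (w * v j).re)
          = (∑ j, P i j) * M ^ 2 - ∑ j, P i j * (w * v j).re := by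
        rw [Finset.sum_mul, ← Finset.sum_sub_distrib]
        apply Finset.sum_congr rfl
        intro j _; ring
      rw [this, hP.2 i, h1, one_mul, sub_self]
    have hall : ∀ j, P i j ≠ 0 → (w * v j).re = M ^ 2 := by
      intro j hj
      have hnn : ∀ j ∈ Finset.univ, 0 ≤ P i j * (M ^ 2 - (w * v j).re) :=
        fun j _ => mul_nonneg (hP.1 i j) (by linarith [hterm j])
      have := (Finset.sum_eq_zero_iff_of_nonneg hnn).mp hzero2 j (Finset.mem_univ j)
      rcases mul_eq_zero.mp this with h | h
      · exact absurd h hj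
      · linarith
    -- pick j with P i j > 0
    have hex : ∃ j, P i j ≠ 0 := by
      by_contra hc
      push_neg at hc
      have := hP.2 i
      rw [Finset.sum_eq_zero (fun j _ => hc j)] at this
      norm_num at this
    obtain ⟨j, hj⟩ := hex
    have hre : (w * v j).re = M ^ 2 := hall j hj
    -- deduce w * v j = M^2
    have habs : ‖w * v j‖ ≤ M ^ 2 := by
      rw [norm_mul, hwnorm]
      calc M * ‖v j‖ ≤ M * M := by
            exact mul_le_mul_of_nonneg_left (hle j) hMpos.le
        _ = M ^ 2 := by ring
    have him : (w * v j).im = 0 := by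
      have h3 : ‖w * v j‖ ^ 2 = (w * v j).re ^ 2 + (w * v j).im ^ 2 := by
        rw [Complex.sq_norm, Complex.normSq_apply]; ring
      have h4 : ‖w * v j‖ ^ 2 ≤ (M ^ 2) ^ 2 := by
        apply pow_le_pow_left₀ (norm_nonneg _) habs
      nlinarith [sq_nonneg ((w * v j).im)]
    have heq : w * v j = ((M ^ 2 : ℝ) : ℂ) := by
      apply Complex.ext
      · rw [hre]; norm_cast
      · rw [him]; norm_cast
    have hvj : v j = μ * v i := mul_left_cancel₀ hw0 (heq.trans hwz.symm)
    refine ⟨j, ?_, hvj⟩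
    rw [hvj, norm_mul, hμ, one_mul, hi]
  -- iterate
  have keyS : ∀ i : {i : Fin S // ‖v i‖ = M}, ∃ j : {i : Fin S // ‖v i‖ = M},
      v j.1 = μ * v i.1 := by
    rintro ⟨i, hi⟩
    obtain ⟨j, h1, h2⟩ := key i hi
    exact ⟨⟨j, h1⟩, h2⟩
  choose F hF using keyS
  set g : ℕ → {i : Fin S // ‖v i‖ = M} := fun t => F^[t] ⟨i₀, rfl⟩ with hg
  have hgv : ∀ t, v (g t).1 = μ ^ t * v i₀ := by
    intro t
    induction t with
    | zero => simp [hg]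
    | succ s ihs =>
      have : g (s + 1) = F (g s) := Function.iterate_succ_apply' F s _
      rw [this, hF, ihs, pow_succ]
      ring
  -- pigeonhole
  have main : ∀ a b : Fin (S + 1), (a : ℕ) < (b : ℕ) → (g a).1 = (g b).1 →
      μ ^ S.factorial = 1 := by
    intro a b hab hgab
    have h1 : μ ^ (a : ℕ) * v i₀ = μ ^ (b : ℕ) * v i₀ := by
      rw [← hgv, ← hgv, hgab]
    have h2 : μ ^ (a : ℕ) = μ ^ (b : ℕ) := mul_right_cancel₀ hvi₀ h1
    have h3 : μ ^ ((b : ℕ) - (a : ℕ)) = 1 := by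
      have hb : (b : ℕ) = ((b : ℕ) - (a : ℕ)) + (a : ℕ) := by omega
      have := h2
      rw [hb, pow_add] at this
      have hμa : μ ^ (a : ℕ) ≠ 0 := pow_ne_zero _ hμ0
      have h4 : μ ^ ((b : ℕ) - (a : ℕ)) * μ ^ (a : ℕ) = 1 * μ ^ (a : ℕ) := by
        rw [one_mul]; exact this.symm
      exact mul_right_cancel₀ hμa h4
    have hdvd : ((b : ℕ) - (a : ℕ)) ∣ S.factorial := by
      apply Nat.dvd_factorial
      · omega
      · have := b.2; omega
    obtain ⟨q, hq⟩ := hdvd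
    rw [hq, pow_mul, h3, one_pow]
  obtain ⟨a, b, hab, hgab⟩ := Fintype.exists_ne_map_eq_of_card_lt
    (fun t : Fin (S + 1) => (g t).1) (by simp)
  rcases lt_or_gt_of_ne (fun h => hab (by exact_mod_cast Fin.ext (by exact_mod_cast congrArg Fin.val h))) with h | h
  · exact main a b (by exact_mod_cast h) hgab
  · exact main b a (by exact_mod_cast h) hgab.symm




lemma aux_rs_mul {S : ℕ} {P Q : Matrix (Fin S) (Fin S) ℝ} (hP : RowStochastic P)
    (hQ : RowStochastic Q) : RowStochastic (P * Q) := by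
  constructor
  · intro i j
    rw [Matrix.mul_apply]
    exact Finset.sum_nonneg fun k _ => mul_nonneg (hP.1 i k) (hQ.1 k j)
  · intro i
    simp only [Matrix.mul_apply]
    rw [Finset.sum_comm]
    calc ∑ k, ∑ j, P i k * Q k j = ∑ k, P i k * ∑ j, Q k j := by
          apply Finset.sum_congr rfl; intro k _; rw [Finset.mul_sum]
      _ = ∑ k, P i k := by
          apply Finset.sum_congr rfl; intro k _; rw [hQ.2 k, mul_one]
      _ = 1 := hP.2 i

lemma aux_rs_pow {S : ℕ} (hS : 0 < S) {P : Matrix (Fin S) (Fin S) ℝ} (hP : RowStochastic P) :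
    ∀ t : ℕ, RowStochastic (P ^ t) := by
  intro t
  induction t with
  | zero =>
    constructor
    · intro i j
      rw [pow_zero]
      by_cases h : i = j <;> simp [Matrix.one_apply, h]
    · intro i
      rw [pow_zero]
      simp [Matrix.one_apply]
  | succ n ih =>
    rw [pow_succ]
    exact aux_rs_mul ih hP

lemma aux_contr {S : ℕ} {Q : Matrix (Fin S) (Fin S) ℝ} (hQ : RowStochastic Q)
    (v : Fin S → ℂ) : ‖(Q.map Complex.ofReal).mulVec v‖ ≤ ‖v‖ := by
  rw [pi_norm_le_iff_of_nonneg (norm_nonneg v)]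
  intro s
  have hrow : (Q.map Complex.ofReal).mulVec v s = ∑ j, (Q s j : ℂ) * v j := by
    simp [Matrix.mulVec, dotProduct, Matrix.map_apply]
  rw [hrow]
  calc ‖∑ j, ((Q s j : ℂ)) * v j‖
      ≤ ∑ j, ‖((Q s j : ℂ)) * v j‖ := norm_sum_le _ _
    _ ≤ ∑ j, Q s j * ‖v‖ := by
        apply Finset.sum_le_sum
        intro j _
        rw [norm_mul, Complex.norm_real, Real.norm_eq_abs, abs_of_nonneg (hQ.1 s j)]
        exact mul_le_mul_of_nonneg_left (norm_le_pi_norm v j) (hQ.1 s j)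
    _ = ‖v‖ := by rw [← Finset.sum_mul, hQ.2 s, one_mul]

lemma aux_mulVecLin_pow {S : ℕ} (A : Matrix (Fin S) (Fin S) ℂ) (t : ℕ) :
    (Matrix.mulVecLin A) ^ t = Matrix.mulVecLin (A ^ t) := by
  induction t with
  | zero => simp [Matrix.mulVecLin_one]; rfl
  | succ n ih => rw [pow_succ, pow_succ, ih, Matrix.mulVecLin_mul]; rfl

/-- for a row-stochastic matrix `P`, the sequence `P^t · x`
converges exponentially to a periodic orbit. -/
theorem stmt_13 (S : ℕ) (hS : 0 < S) (P : Matrix (Fin S) (Fin S) ℝ)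
    (hP : RowStochastic P) (x : Fin S → ℝ) :
    ∃ (ρ : ℝ) (p T : ℕ) (y : ℕ → Fin S → ℝ), 0 < ρ ∧ 1 ≤ p ∧
      (∀ t, T ≤ t → y (t + p) = y t) ∧
      ∀ s : Fin S,
        Filter.Tendsto (fun t : ℕ => Real.exp (ρ * t) * |((P ^ t).mulVec x) s - y t s|)
          Filter.atTop (nhds 0) := by
  classical
  set A : Matrix (Fin S) (Fin S) ℂ := P.map Complex.ofReal with hA
  set f : Module.End ℂ (Fin S → ℂ) := Matrix.mulVecLin A with hfdef
  have hfone : ∀ v, ‖f v‖ ≤ ‖v‖ := fun v => by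
    simpa [hfdef, Matrix.mulVecLin_apply] using aux_contr hP v
  have hfpow : ∀ (t : ℕ) (v : Fin S → ℂ), ‖(f ^ t) v‖ ≤ ‖v‖ := aux_pow_norm_le f hfone
  set xc : Fin S → ℂ := fun i => (x i : ℂ) with hxc
  have hApow : ∀ t : ℕ, A ^ t = (P ^ t).map Complex.ofReal := by
    intro t
    have h := map_pow (Complex.ofRealHom.mapMatrix (m := Fin S)) P t
    rw [RingHom.mapMatrix_apply, RingHom.mapMatrix_apply] at h
    exact h.symm
  have hreal : ∀ (t : ℕ) (s : Fin S), ((f ^ t) xc) s = (((P ^ t).mulVec x) s : ℂ) := by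
    intro t s
    rw [hfdef, aux_mulVecLin_pow, Matrix.mulVecLin_apply, hApow]
    simp only [Matrix.mulVec, dotProduct, Matrix.map_apply, hxc]
    norm_cast
  -- spectral decomposition
  have hx : xc ∈ ⨆ μ : ℂ, f.maxGenEigenspace μ := by
    rw [Module.End.iSup_maxGenEigenspace_eq_top]; trivial
  obtain ⟨c, hc, hsum⟩ := (Submodule.mem_iSup_iff_exists_finsupp _ xc).mp hx
  have hgen : ∀ μ : ℂ, ∃ k : ℕ, ((f - μ • 1) ^ k) (c μ) = 0 := fun μ =>
    (Module.End.mem_maxGenEigenspace f μ (c μ)).mp (hc μ)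
  have habs_le : ∀ μ ∈ c.support, ‖μ‖ ≤ 1 := by
    intro μ hμs
    obtain ⟨k, hk⟩ := hgen μ
    obtain ⟨w, hw0, hw⟩ := aux_exists_eigvec f μ k (c μ) hk (Finsupp.mem_support_iff.mp hμs)
    exact aux_eig_abs_le f hfone hw0 hw
  set Λ1 := c.support.filter (fun μ => ‖μ‖ = 1) with hΛ1
  set Λ0 := c.support.filter (fun μ => ¬ ‖μ‖ = 1) with hΛ0
  have hΛ0lt : ∀ μ ∈ Λ0, ‖μ‖ < 1 := by
    intro μ h
    rw [hΛ0, Finset.mem_filter] at h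
    exact lt_of_le_of_ne (habs_le μ h.1) h.2
  have heig1 : ∀ μ ∈ Λ1, f (c μ) = μ • (c μ) := by
    intro μ h
    rw [hΛ1, Finset.mem_filter] at h
    obtain ⟨k, hk⟩ := hgen μ
    exact aux_semisimple f hfpow h.2 k (c μ) hk
  have hfteig : ∀ μ ∈ Λ1, ∀ t : ℕ, (f ^ t) (c μ) = μ ^ t • (c μ) := by
    intro μ h t
    induction t with
    | zero => simp
    | succ n ih =>
      have hps : (f ^ (n + 1)) (c μ) = f ((f ^ n) (c μ)) := by rw [pow_succ']; rfl
      rw [hps, ih, map_smul, heig1 μ h, smul_smul, pow_succ, mul_comm]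
  have hrou : ∀ μ ∈ Λ1, μ ^ S.factorial = 1 := by
    intro μ h
    have h' := h
    rw [hΛ1, Finset.mem_filter] at h'
    apply aux_root_of_unity hS P hP h'.2 (Finsupp.mem_support_iff.mp h'.1)
    have := heig1 μ h
    rw [hfdef, Matrix.mulVecLin_apply] at this
    exact this
  -- the rate
  set r : ℝ := (insert (0:ℝ) (Λ0.image (fun μ => ‖μ‖))).max'
    (Finset.insert_nonempty _ _) with hr
  have hr0 : 0 ≤ r := Finset.le_max' _ _ (Finset.mem_insert_self _ _)
  have hr1 : r < 1 := by
    rw [hr, Finset.max'_lt_iff]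
    intro y hy
    rcases Finset.mem_insert.mp hy with h | h
    · rw [h]; norm_num
    · obtain ⟨μ, hμ, rfl⟩ := Finset.mem_image.mp h
      exact hΛ0lt μ hμ
  have hrle : ∀ μ ∈ Λ0, ‖μ‖ ≤ r := fun μ h =>
    Finset.le_max' _ _ (Finset.mem_insert_of_mem (Finset.mem_image_of_mem _ h))
  set ρ : ℝ := Real.log (2 / (1 + r)) with hρ
  have h1r : (0:ℝ) < 1 + r := by linarith
  have hρpos : 0 < ρ := Real.log_pos (by rw [lt_div_iff₀ h1r]; linarith)
  have hexpρ : Real.exp ρ = 2 / (1 + r) := Real.exp_log (by positivity)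
  have hq : Real.exp ρ * r < 1 := by
    rw [hexpρ, div_mul_eq_mul_div, div_lt_one h1r]; linarith
  have hexppos : ∀ t : ℕ, 0 < Real.exp (ρ * t) := fun t => Real.exp_pos _
  refine ⟨ρ, S.factorial, 0, fun t s => (∑ μ ∈ Λ1, μ ^ t * (c μ s)).re, hρpos,
    S.factorial_pos, ?_, ?_⟩
  · intro t _
    funext s
    simp only
    congr 1
    apply Finset.sum_congr rfl
    intro μ hμ
    rw [pow_add, hrou μ hμ, mul_one]
  · intro s
    -- difference identity
    have hdiff : ∀ t : ℕ, ((P ^ t).mulVec x) s - (∑ μ ∈ Λ1, μ ^ t * (c μ s)).re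
        = (∑ μ ∈ Λ0, ((f ^ t) (c μ)) s).re := by
      intro t
      have hxcs : xc = ∑ μ ∈ c.support, c μ := by rw [← hsum]; rfl
      have hsplit : (f ^ t) xc = (∑ μ ∈ Λ1, μ ^ t • c μ) + ∑ μ ∈ Λ0, (f ^ t) (c μ) := by
        conv_lhs => rw [hxcs]
        rw [map_sum, ← Finset.sum_filter_add_sum_filter_not c.support (fun μ => ‖μ‖ = 1)]
        congr 1
        apply Finset.sum_congr rfl
        intro μ h
        exact hfteig μ h t
      have h1 : ((f ^ t) xc) s
          = (∑ μ ∈ Λ1, μ ^ t * c μ s) + ∑ μ ∈ Λ0, ((f ^ t) (c μ)) s := by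
        rw [hsplit]
        simp [Finset.sum_apply, Pi.smul_apply, smul_eq_mul]
      rw [hreal t s] at h1
      have h2 := congrArg Complex.re h1
      simp only [Complex.ofReal_re, Complex.add_re, Complex.re_sum] at h2
      rw [h2]
      have h3 : (∑ μ ∈ Λ0, ((f ^ t) (c μ)) s).re = ∑ μ ∈ Λ0, (((f ^ t) (c μ)) s).re := by
        simp [Complex.re_sum]
      have h4 : (∑ μ ∈ Λ1, μ ^ t * c μ s).re = ∑ μ ∈ Λ1, (μ ^ t * c μ s).re := by
        simp [Complex.re_sum]
      rw [h3, h4]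
      ring
    -- squeeze
    show Tendsto (fun t : ℕ => Real.exp (ρ * t)
      * |((P ^ t).mulVec x) s - (∑ μ ∈ Λ1, μ ^ t * (c μ s)).re|) atTop (nhds 0)
    apply squeeze_zero (fun t => by positivity)
      (g := fun t : ℕ => ∑ μ ∈ Λ0, Real.exp (ρ * (t : ℝ)) * ‖(f ^ t) (c μ)‖)
    · intro t
      rw [hdiff t]
      have hb : |(∑ μ ∈ Λ0, ((f ^ t) (c μ)) s).re| ≤ ∑ μ ∈ Λ0, ‖(f ^ t) (c μ)‖ := by
        calc |(∑ μ ∈ Λ0, ((f ^ t) (c μ)) s).re|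
            ≤ ‖∑ μ ∈ Λ0, ((f ^ t) (c μ)) s‖ := Complex.abs_re_le_norm _
          _ = ‖∑ μ ∈ Λ0, ((f ^ t) (c μ)) s‖ := rfl
          _ ≤ ∑ μ ∈ Λ0, ‖((f ^ t) (c μ)) s‖ := norm_sum_le _ _
          _ ≤ ∑ μ ∈ Λ0, ‖(f ^ t) (c μ)‖ :=
              Finset.sum_le_sum fun μ _ => norm_le_pi_norm _ s
      calc Real.exp (ρ * t) * |(∑ μ ∈ Λ0, ((f ^ t) (c μ)) s).re|
          ≤ Real.exp (ρ * t) * ∑ μ ∈ Λ0, ‖(f ^ t) (c μ)‖ :=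
            mul_le_mul_of_nonneg_left hb (hexppos t).le
        _ = ∑ μ ∈ Λ0, Real.exp (ρ * t) * ‖(f ^ t) (c μ)‖ := Finset.mul_sum _ _ _
    · -- sum of tendsto zero
      have : Tendsto (fun t : ℕ => ∑ μ ∈ Λ0, Real.exp (ρ * t) * ‖(f ^ t) (c μ)‖)
          atTop (nhds (∑ μ ∈ Λ0, (0:ℝ))) := by
        apply tendsto_finset_sum
        intro μ hμ
        obtain ⟨k, hk⟩ := hgen μ
        by_cases hμ0 : μ = 0
        · -- eventually zero
          have hev : ∀ t : ℕ, k ≤ t → (f ^ t) (c μ) = 0 := by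
            intro t ht
            have hfk : (f ^ k) (c μ) = 0 := by
              simpa [hμ0] using hk
            have : f ^ t = f ^ (t - k) * f ^ k := by
              rw [← pow_add, Nat.sub_add_cancel ht]
            rw [this, Module.End.mul_apply, hfk, map_zero]
          apply Tendsto.congr' _ tendsto_const_nhds
          filter_upwards [eventually_ge_atTop k] with t ht
          rw [hev t ht, norm_zero, mul_zero]
        · obtain ⟨K, hK⟩ := aux_decay f hμ0 hk
          have hq' : 0 ≤ Real.exp ρ * ‖μ‖ := by positivity
          have hq1 : Real.exp ρ * ‖μ‖ < 1 :=
            lt_of_le_of_lt (mul_le_mul_of_nonneg_left (hrle μ hμ) (Real.exp_pos ρ).le) hq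
          apply squeeze_zero' (f := fun t : ℕ => Real.exp (ρ * t) * ‖(f ^ t) (c μ)‖)
            (g := fun t : ℕ => K * ((t : ℝ) ^ k * (Real.exp ρ * ‖μ‖) ^ t))
          · filter_upwards with t; positivity
          · filter_upwards [eventually_ge_atTop (max 1 k)] with t ht
            have ht1 : 1 ≤ t := le_trans (le_max_left _ _) ht
            have htk : k ≤ t := le_trans (le_max_right _ _) ht
            have hbd := hK t ht1 htk
            have hexp : Real.exp (ρ * t) = Real.exp ρ ^ t := by
              rw [mul_comm, Real.exp_nat_mul]
            calc Real.exp (ρ * t) * ‖(f ^ t) (c μ)‖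
                ≤ Real.exp (ρ * t) * (K * (t : ℝ) ^ k * ‖μ‖ ^ t) :=
                  mul_le_mul_of_nonneg_left hbd (hexppos t).le
              _ = K * ((t : ℝ) ^ k * (Real.exp ρ * ‖μ‖) ^ t) := by
                  rw [hexp, mul_pow]; ring
          · simpa using (tendsto_pow_const_mul_const_pow_of_lt_one k hq' hq1).const_mul K
      simpa using this
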